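/- For a graph G with no isolated vertex, ∂_{2p}(G) = ρ(G)·(Δ(G) - 1) if and only if there exists a maximum 2-packing S such that every vertex of S has degree Δ(G). -/
import Mathlib


open Finset

variable {V : Type*}

/-- `S` is a 2-packing: closed neighbourhoods of distinct vertices of `S` are disjoint. -/
def IsPacking2 (G : SimpleGraph V) (S : Finset V) : Prop :=
  (S : Set V).Pairwise fun u v =>
    Disjoint (G.neighborSet u ∪ {u}) (G.neighborSet v ∪ {v})

/-- The external neighbourhood of `S`: vertices outside `S` with a neighbour in `S`. -/
def extN (G : SimpleGraph V) [Fintype V] [DecidableEq V] [DecidableRel G.Adj]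
    (S : Finset V) : Finset V :=
  Finset.univ.filter fun v => v ∉ S ∧ ∃ u ∈ S, G.Adj u v

/-- The differential of a set `S`: `|N_e(S)| - |S|`. -/
def diffSet (G : SimpleGraph V) [Fintype V] [DecidableEq V] [DecidableRel G.Adj]
    (S : Finset V) : ℤ :=
  ((extN G S).card : ℤ) - S.card

/-- The 2-packing differential of `G`. -/
noncomputable def pdiff2 (G : SimpleGraph V) [Fintype V] [DecidableEq V]
    [DecidableRel G.Adj] : ℤ :=
  sSup {d : ℤ | ∃ S : Finset V, IsPacking2 G S ∧ d = diffSet G S}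

/-- The packing number of `G`: maximum cardinality of a 2-packing. -/
noncomputable def packNum (G : SimpleGraph V) [Fintype V] : ℕ :=
  sSup {n : ℕ | ∃ S : Finset V, IsPacking2 G S ∧ n = S.card}

/-- `G` has no isolated vertex. -/
def NoIsolated (G : SimpleGraph V) : Prop := ∀ v : V, ∃ u, G.Adj v u

/-- `S` is a dominating set of `G`. -/
def IsDom (G : SimpleGraph V) (S : Finset V) : Prop :=
  ∀ v, v ∉ S → ∃ u ∈ S, G.Adj u v

lemma packing_empty (G : SimpleGraph V) : IsPacking2 G ∅ := by
  simp [IsPacking2]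

lemma packing_adj_not_mem {G : SimpleGraph V} {S : Finset V} (hS : IsPacking2 G S)
    {u v : V} (hu : u ∈ S) (hadj : G.Adj u v) : v ∉ S := by
  intro hv
  have h := hS hu hv hadj.ne
  exact Set.disjoint_left.mp h (Set.mem_union_left _ hadj) (Set.mem_union_right _ rfl)

lemma packing_nf_disjoint {G : SimpleGraph V} [Fintype V] [DecidableRel G.Adj] {S : Finset V}
    (hS : IsPacking2 G S) {u v : V} (hu : u ∈ S) (hv : v ∈ S) (huv : u ≠ v) :
    Disjoint (G.neighborFinset u) (G.neighborFinset v) := by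
  have h := hS hu hv huv
  rw [Finset.disjoint_left]
  intro a ha hb
  exact Set.disjoint_left.mp h (Set.mem_union_left _ (by simpa using ha))
    (Set.mem_union_left _ (by simpa using hb))

lemma extN_eq {G : SimpleGraph V} [Fintype V] [DecidableEq V] [DecidableRel G.Adj]
    {S : Finset V} (hS : IsPacking2 G S) : extN G S = S.biUnion (fun u => G.neighborFinset u) := by
  ext v
  simp only [extN, mem_filter, mem_univ, true_and, mem_biUnion,
    SimpleGraph.mem_neighborFinset]
  constructor
  · rintro ⟨-, u, hu, h⟩; exact ⟨u, hu, h⟩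
  · rintro ⟨u, hu, h⟩; exact ⟨packing_adj_not_mem hS hu h, u, hu, h⟩

lemma card_extN {G : SimpleGraph V} [Fintype V] [DecidableEq V] [DecidableRel G.Adj]
    {S : Finset V} (hS : IsPacking2 G S) :
    (extN G S).card = ∑ u ∈ S, G.degree u := by
  rw [extN_eq hS, card_biUnion fun u hu v hv huv => packing_nf_disjoint hS hu hv huv]
  rfl

section
variable [Fintype V] [DecidableEq V] (G : SimpleGraph V) [DecidableRel G.Adj]

lemma packNum_bdd : BddAbove {n : ℕ | ∃ S : Finset V, IsPacking2 G S ∧ n = S.card} :=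
  ⟨Fintype.card V, by rintro n ⟨S, -, rfl⟩; simpa using S.card_le_univ⟩

lemma packNum_spec : ∃ S : Finset V, IsPacking2 G S ∧ S.card = packNum G := by
  obtain ⟨S, hS, hn⟩ := Nat.sSup_mem (s := {n : ℕ | ∃ S : Finset V, IsPacking2 G S ∧ n = S.card})
    ⟨0, ∅, packing_empty G, by simp⟩ (packNum_bdd G)
  exact ⟨S, hS, hn.symm⟩

lemma card_le_packNum {S : Finset V} (hS : IsPacking2 G S) : S.card ≤ packNum G :=
  le_csSup (packNum_bdd G) ⟨S, hS, rfl⟩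

lemma diffSet_eq {S : Finset V} (hS : IsPacking2 G S) :
    diffSet G S = (∑ u ∈ S, (G.degree u : ℤ)) - S.card := by
  rw [diffSet, card_extN hS]; push_cast; ring

lemma diffSet_le {S : Finset V} (hS : IsPacking2 G S) :
    diffSet G S ≤ (S.card : ℤ) * ((G.maxDegree : ℤ) - 1) := by
  have hsum : ∑ u ∈ S, G.degree u ≤ S.card • G.maxDegree :=
    Finset.sum_le_card_nsmul S _ _ (fun u _ => G.degree_le_maxDegree u)
  rw [smul_eq_mul] at hsum
  have h2 : ((∑ u ∈ S, G.degree u : ℕ) : ℤ) ≤ (S.card : ℤ) * G.maxDegree := by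
    exact_mod_cast hsum
  rw [diffSet_eq G hS]
  push_cast at h2 ⊢
  linarith

lemma pdiff2_bdd : BddAbove {d : ℤ | ∃ S : Finset V, IsPacking2 G S ∧ d = diffSet G S} := by
  refine ⟨(Fintype.card V : ℤ), ?_⟩
  rintro d ⟨S, hS, rfl⟩
  have h1 : (extN G S).card ≤ Fintype.card V := by simpa using (extN G S).card_le_univ
  rw [diffSet]
  omega

lemma pdiff2_mem : ∃ S : Finset V, IsPacking2 G S ∧ pdiff2 G = diffSet G S := by
  have hne : {d : ℤ | ∃ S : Finset V, IsPacking2 G S ∧ d = diffSet G S}.Nonempty :=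
    ⟨diffSet G ∅, ∅, packing_empty G, rfl⟩
  exact Int.csSup_mem hne (pdiff2_bdd G)

end


theorem stmt3 {V : Type*} [Fintype V] [DecidableEq V] (G : SimpleGraph V)
    [DecidableRel G.Adj] (h : NoIsolated G) :
    pdiff2 G = (packNum G : ℤ) * ((G.maxDegree : ℤ) - 1) ↔
      ∃ S : Finset V, IsPacking2 G S ∧ S.card = packNum G ∧
        ∀ v ∈ S, G.degree v = G.maxDegree := by
  rcases isEmpty_or_nonempty V with hV | hV
  · obtain ⟨S0, hS0, hcard0⟩ := packNum_spec G
    have hp0 : packNum G = 0 := by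
      rw [← hcard0, Finset.eq_empty_of_isEmpty S0, Finset.card_empty]
    obtain ⟨S1, hS1, hd1⟩ := pdiff2_mem G
    have hz : pdiff2 G = 0 := by
      rw [hd1, diffSet, Finset.eq_empty_of_isEmpty S1,
        Finset.eq_empty_of_isEmpty (extN G ∅)]
      simp
    refine iff_of_true ?_ ⟨∅, packing_empty G, by simp [hp0], fun v _ => isEmptyElim v⟩
    rw [hz, hp0]; simp
  · obtain ⟨v⟩ := hV
    obtain ⟨u, huv⟩ := h v
    have hdeg : 0 < G.degree v := by
      rw [G.degree_pos_iff_exists_adj]; exact ⟨u, huv⟩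
    have hΔ : 1 ≤ G.maxDegree := hdeg.trans_le (G.degree_le_maxDegree v)
    have hΔ' : (1 : ℤ) ≤ (G.maxDegree : ℤ) := by exact_mod_cast hΔ
    have hle : pdiff2 G ≤ (packNum G : ℤ) * ((G.maxDegree : ℤ) - 1) := by
      have hne : {d : ℤ | ∃ S : Finset V, IsPacking2 G S ∧ d = diffSet G S}.Nonempty :=
        ⟨diffSet G ∅, ∅, packing_empty G, rfl⟩
      apply csSup_le hne
      rintro d ⟨S, hS, rfl⟩
      calc diffSet G S ≤ (S.card : ℤ) * ((G.maxDegree : ℤ) - 1) := diffSet_le G hS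
        _ ≤ (packNum G : ℤ) * ((G.maxDegree : ℤ) - 1) := by
            apply mul_le_mul_of_nonneg_right
            · exact_mod_cast card_le_packNum G hS
            · linarith
    constructor
    · intro heq
      rcases eq_or_lt_of_le hΔ with h1 | h2
      · obtain ⟨S, hS, hc⟩ := packNum_spec G
        refine ⟨S, hS, hc, fun w _ => ?_⟩
        have hw1 : 0 < G.degree w := by
          rw [G.degree_pos_iff_exists_adj]; exact h w
        have hw2 := G.degree_le_maxDegree w
        omega
      · obtain ⟨S, hS, hd⟩ := pdiff2_mem G
        have hdle := diffSet_le G hS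
        have hcle : S.card ≤ packNum G := card_le_packNum G hS
        have h2' : (2 : ℤ) ≤ (G.maxDegree : ℤ) := by exact_mod_cast h2
        have e1 : (S.card : ℤ) * ((G.maxDegree : ℤ) - 1)
            = (packNum G : ℤ) * ((G.maxDegree : ℤ) - 1) :=
          le_antisymm
            (mul_le_mul_of_nonneg_right (by exact_mod_cast hcle) (by linarith))
            (by rw [← heq, hd]; exact hdle)
        have hcardeq : S.card = packNum G := by
          have := mul_right_cancel₀ (by linarith : ((G.maxDegree : ℤ) - 1) ≠ 0) e1
          exact_mod_cast this
        have hsum : (∑ u ∈ S, (G.degree u : ℤ)) = (S.card : ℤ) * G.maxDegree := by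
          have hds : diffSet G S = (packNum G : ℤ) * ((G.maxDegree : ℤ) - 1) := by
            rw [← hd, heq]
          rw [diffSet_eq G hS, ← hcardeq] at hds
          push_cast at hds
          linarith
        refine ⟨S, hS, hcardeq, fun w hw => ?_⟩
        by_contra hne
        have hlt : G.degree w < G.maxDegree :=
          lt_of_le_of_ne (G.degree_le_maxDegree w) hne
        have hstrict : (∑ u ∈ S, (G.degree u : ℤ)) < ∑ _u ∈ S, (G.maxDegree : ℤ) :=
          Finset.sum_lt_sum (fun u _ => by exact_mod_cast G.degree_le_maxDegree u)
            ⟨w, hw, by exact_mod_cast hlt⟩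
        rw [Finset.sum_const, nsmul_eq_mul, hsum] at hstrict
        exact lt_irrefl _ hstrict
    · rintro ⟨S, hS, hc, hdegS⟩
      refine le_antisymm hle ?_
      have hds : diffSet G S = (packNum G : ℤ) * ((G.maxDegree : ℤ) - 1) := by
        rw [diffSet_eq G hS]
        have : ∑ u ∈ S, (G.degree u : ℤ) = (S.card : ℤ) * G.maxDegree := by
          rw [Finset.sum_congr rfl (fun u hu => by rw [hdegS u hu]),
            Finset.sum_const, nsmul_eq_mul]
        rw [this, hc]; ring
      rw [← hds]
      exact le_csSup (pdiff2_bdd G) ⟨S, hS, rfl⟩
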